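/- (Misère Periodicity Theorem, game-level form) Let Γ be an octal game with octal code 0.d₁...d_k, where d_k ≠ 0 and d_i = 0 for i > k, and let H_n denote the Γ-heap of size n. Fix n₀ > 0 and p > 0, set M = 2n₀ + 2p + k, let 𝒜_M = cl(H₀, H₁, ..., H_M) and let 𝒜 = cl(H₀, H₁, H₂, ...) be the set of all positions of Γ. Suppose H_{n+p} ≡_{𝒜_M} H_n for every n with n₀ ≤ n < 2n₀ + p + k. Then: (a) for all G₁, G₂ ∈ 𝒜_M, G₁ ≡_{𝒜_M} G₂ if and only if G₁ ≡_𝒜 G₂; and (b) H_{n+p} ≡_𝒜 H_n for all n ≥ n₀. -/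

import Mathlib

universe u

noncomputable section

namespace SetTheory

/-- Pre-games, as formerly defined in Mathlib (`Mathlib.SetTheory.Game.PGame`), which has
since been removed from Mathlib. -/
inductive PGame : Type (u + 1)
  | mk : ∀ α β : Type u, (α → PGame) → (β → PGame) → PGame

namespace PGame

/-- The indexing type for allowable moves by Left. -/
def LeftMoves : PGame → Type u
  | mk l _ _ _ => l

/-- The indexing type for allowable moves by Right. -/
def RightMoves : PGame → Type u
  | mk _ r _ _ => r

/-- The new game after Left makes an allowed move. -/
def moveLeft : ∀ g : PGame, LeftMoves g → PGame
  | mk _l _ L _ => L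

/-- The new game after Right makes an allowed move. -/
def moveRight : ∀ g : PGame, RightMoves g → PGame
  | mk _ _r _ R => R

/-- The pre-game `Zero` is defined by `0 = { | }`. -/
instance : Zero PGame :=
  ⟨⟨PEmpty, PEmpty, PEmpty.elim, PEmpty.elim⟩⟩

/-- The sum of `x = {xL | xR}` and `y = {yL | yR}` is `{xL + y, x + yL | xR + y, x + yR}`. -/
def add (x y : PGame.{u}) : PGame.{u} := by
  induction x generalizing y with | mk xl xr _ _ IHxl IHxr => _
  induction y with | mk yl yr yL yR IHyl IHyr => _
  have y := mk yl yr yL yR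
  refine ⟨xl ⊕ yl, xr ⊕ yr, Sum.rec ?_ ?_, Sum.rec ?_ ?_⟩
  · exact fun i => IHxl i y
  · exact fun i => IHyl i
  · exact fun i => IHxr i y
  · exact fun i => IHyr i

instance : Add PGame.{u} :=
  ⟨add⟩

end PGame

end SetTheory

open SetTheory PGame

/-- `G` is a misère P-position: `G` has at least one option and every option of `G` is a
misère N-position (i.e. not a misère P-position).  In particular the empty game `0` is a
misère N-position.  (For an impartial game the options are the left moves.) -/
def MisereP : PGame → Prop
  | PGame.mk l _ L _ => Nonempty l ∧ ∀ i, ¬ MisereP (L i)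

/-- Membership in the closure `cl 𝒮` of a set `𝒮` of games: the smallest closed set
containing `𝒮` (all finite disjunctive sums of subpositions of games in `𝒮`, including
the empty sum `0`). -/
inductive InClosure (S : Set PGame) : PGame → Prop
  | base {G} : G ∈ S → InClosure S G
  | zero : InClosure S 0
  | add {G H} : InClosure S G → InClosure S H → InClosure S (G + H)
  | moveLeft {G} (i : G.LeftMoves) : InClosure S G → InClosure S (G.moveLeft i)
  | moveRight {G} (j : G.RightMoves) : InClosure S G → InClosure S (G.moveRight j)

/-- The closure `cl 𝒮` of a set `𝒮` of games. -/
def gameClosure (S : Set PGame) : Set PGame := {G | InClosure S G}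

/-- `G ≡_ℬ H`: for every `X ∈ ℬ`, the games `G + X` and `H + X` have the same misère
outcome. -/
def MisEquivOn (B : Set PGame) (G H : PGame) : Prop :=
  ∀ X ∈ B, (MisereP (G + X) ↔ MisereP (H + X))

/-- The heap `H n` of the octal game with code digits `d 1, d 2, d 3, …`
(the value `d 0` is irrelevant: removals of `j` boxes are only allowed for `j ≥ 1`).
Writing `d j = ε₀ + 2·ε₁ + 4·ε₂`, a move removing `j` boxes from a heap of size `n` may go:
* to the empty position `0`, if `j = n` and `ε₀ = 1`;
* to the single heap `H (n - j)`, if `n - j ≥ 1` and `ε₁ = 1`;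
* to the sum `H a + H b` with `a, b ≥ 1` and `a + b = n - j`, if `ε₂ = 1`. -/
def octalHeap (d : ℕ → ℕ) : ℕ → PGame.{0}
  | n =>
    PGame.mk
      ({ j : ℕ // j = n ∧ 1 ≤ j ∧ (d j).testBit 0 } ⊕
        ({ j : ℕ // 1 ≤ j ∧ j + 1 ≤ n ∧ (d j).testBit 1 } ⊕
          { q : ℕ × ℕ × ℕ //
              1 ≤ q.1 ∧ 1 ≤ q.2.1 ∧ 1 ≤ q.2.2 ∧ q.1 + q.2.1 + q.2.2 = n ∧
                (d q.1).testBit 2 }))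
      ({ j : ℕ // j = n ∧ 1 ≤ j ∧ (d j).testBit 0 } ⊕
        ({ j : ℕ // 1 ≤ j ∧ j + 1 ≤ n ∧ (d j).testBit 1 } ⊕
          { q : ℕ × ℕ × ℕ //
              1 ≤ q.1 ∧ 1 ≤ q.2.1 ∧ 1 ≤ q.2.2 ∧ q.1 + q.2.1 + q.2.2 = n ∧
                (d q.1).testBit 2 }))
      (fun i =>
        match i with
        | Sum.inl _ => 0
        | Sum.inr (Sum.inl ⟨j, _hj⟩) => octalHeap d (n - j)
        | Sum.inr (Sum.inr ⟨⟨_, a, b⟩, _hq⟩) => octalHeap d a + octalHeap d b)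
      (fun i =>
        match i with
        | Sum.inl _ => 0
        | Sum.inr (Sum.inl ⟨j, _hj⟩) => octalHeap d (n - j)
        | Sum.inr (Sum.inr ⟨⟨_, a, b⟩, _hq⟩) => octalHeap d a + octalHeap d b)
termination_by n => n
decreasing_by all_goals (simp_all; omega)

namespace SetTheory
namespace PGame

inductive Relabelling : PGame.{u} → PGame.{u} → Type (u + 1)
  | mk : ∀ {x y : PGame} (L : x.LeftMoves ≃ y.LeftMoves) (R : x.RightMoves ≃ y.RightMoves),
      (∀ i, Relabelling (x.moveLeft i) (y.moveLeft (L i))) →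
        (∀ j, Relabelling (x.moveRight j) (y.moveRight (R j))) → Relabelling x y

infixl:50 " ≡r " => PGame.Relabelling

def Relabelling.castLeft {a b c : PGame.{u}} (h : a = b) (r : a ≡r c) : b ≡r c := by
  subst h; exact r

def Relabelling.refl (x : PGame.{u}) : x ≡r x := by
  induction x with
  | mk xl xr xL xR ihl ihr => exact ⟨Equiv.refl _, Equiv.refl _, ihl, ihr⟩

def Relabelling.symm {x y : PGame.{u}} (r : x ≡r y) : y ≡r x := by
  induction r with
  | @mk x y L R hL hR ihL ihR =>
  exact ⟨L.symm, R.symm,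
    fun i => Relabelling.castLeft (congrArg y.moveLeft (L.apply_symm_apply i)) (ihL (L.symm i)),
    fun j => Relabelling.castLeft (congrArg y.moveRight (R.apply_symm_apply j)) (ihR (R.symm j))⟩

def Relabelling.trans {x y z : PGame.{u}} (r₁ : x ≡r y) (r₂ : y ≡r z) : x ≡r z := by
  induction r₁ generalizing z with
  | @mk x y L R hL hR ihL ihR =>
  cases r₂ with
  | mk L' R' hL' hR' =>
  exact ⟨L.trans L', R.trans R', fun i => ihL i (hL' (L i)), fun j => ihR j (hR' (R j))⟩

def Relabelling.leftMovesEquiv {x y : PGame.{u}} (r : x ≡r y) : x.LeftMoves ≃ y.LeftMoves := by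
  cases r with
  | mk L _ _ _ => exact L

def Relabelling.rightMovesEquiv {x y : PGame.{u}} (r : x ≡r y) : x.RightMoves ≃ y.RightMoves := by
  cases r with
  | mk _ R _ _ => exact R

def Relabelling.moveLeft {x y : PGame.{u}} (r : x ≡r y) (i : x.LeftMoves) :
    x.moveLeft i ≡r y.moveLeft (r.leftMovesEquiv i) := by
  cases r with
  | mk L R hL hR => exact hL i

def Relabelling.moveRight {x y : PGame.{u}} (r : x ≡r y) (j : x.RightMoves) :
    x.moveRight j ≡r y.moveRight (r.rightMovesEquiv j) := by
  cases r with
  | mk L R hL hR => exact hR j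

def toLeftMovesAdd {x y : PGame.{u}} : x.LeftMoves ⊕ y.LeftMoves ≃ (x + y).LeftMoves := by
  cases x; cases y; exact Equiv.refl _

def toRightMovesAdd {x y : PGame.{u}} : x.RightMoves ⊕ y.RightMoves ≃ (x + y).RightMoves := by
  cases x; cases y; exact Equiv.refl _

theorem add_moveLeft_inl (x : PGame.{u}) {y : PGame.{u}} (i : x.LeftMoves) :
    (x + y).moveLeft (toLeftMovesAdd (Sum.inl i)) = x.moveLeft i + y := by
  cases x; cases y; rfl

theorem add_moveLeft_inr (x : PGame.{u}) {y : PGame.{u}} (i : y.LeftMoves) :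
    (x + y).moveLeft (toLeftMovesAdd (Sum.inr i)) = x + y.moveLeft i := by
  cases x; cases y; rfl

theorem add_moveRight_inl (x : PGame.{u}) {y : PGame.{u}} (i : x.RightMoves) :
    (x + y).moveRight (toRightMovesAdd (Sum.inl i)) = x.moveRight i + y := by
  cases x; cases y; rfl

theorem add_moveRight_inr (x : PGame.{u}) {y : PGame.{u}} (i : y.RightMoves) :
    (x + y).moveRight (toRightMovesAdd (Sum.inr i)) = x + y.moveRight i := by
  cases x; cases y; rfl

def Relabelling.addCongr {w x y z : PGame.{u}} (r₁ : w ≡r x) (r₂ : y ≡r z) :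
    w + y ≡r x + z := by
  induction r₁ generalizing y z with
  | @mk w x L R hL hR ihL ihR =>
  induction r₂ with
  | @mk y z L' R' hL' hR' ihL' ihR' =>
  cases w; cases x; cases y; cases z
  refine ⟨Equiv.sumCongr L L', Equiv.sumCongr R R', ?_, ?_⟩
  · rintro (i | i)
    · exact ihL i ⟨L', R', hL', hR'⟩
    · exact ihL' i
  · rintro (i | i)
    · exact ihR i ⟨L', R', hL', hR'⟩
    · exact ihR' i

def addCommRelabelling (x y : PGame.{u}) : x + y ≡r y + x := by
  induction x generalizing y with
  | mk xl xr xL xR ihxl ihxr =>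
  induction y with
  | mk yl yr yL yR ihyl ihyr =>
  refine ⟨Equiv.sumComm xl yl, Equiv.sumComm xr yr, ?_, ?_⟩
  · rintro (i | i)
    · exact ihxl i _
    · exact ihyl i
  · rintro (i | i)
    · exact ihxr i _
    · exact ihyr i

def addAssocRelabelling (x y z : PGame.{u}) : x + y + z ≡r x + (y + z) := by
  induction x generalizing y z with
  | mk xl xr xL xR ihx ihxr =>
  induction y generalizing z with
  | mk yl yr yL yR ihy ihyr =>
  induction z with
  | mk zl zr zL zR ihz ihzr =>
  refine ⟨Equiv.sumAssoc xl yl zl, Equiv.sumAssoc xr yr zr, ?_, ?_⟩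
  · rintro ((i | i) | i)
    · exact ihx i _ _
    · exact ihy i _
    · exact ihz i
  · rintro ((i | i) | i)
    · exact ihxr i _ _
    · exact ihyr i _
    · exact ihzr i

def zeroAddRelabelling (x : PGame.{u}) : 0 + x ≡r x := by
  induction x with
  | mk xl xr xL xR ihl ihr =>
  refine ⟨Equiv.emptySum _ _, Equiv.emptySum _ _, ?_, ?_⟩
  · rintro (i | i)
    · exact i.elim
    · exact ihl i
  · rintro (i | i)
    · exact i.elim
    · exact ihr i

def addZeroRelabelling (x : PGame.{u}) : x + 0 ≡r x := by
  induction x with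
  | mk xl xr xL xR ihl ihr =>
  refine ⟨Equiv.sumEmpty _ _, Equiv.sumEmpty _ _, ?_, ?_⟩
  · rintro (i | i)
    · exact ihl i
    · exact i.elim
  · rintro (i | i)
    · exact ihr i
    · exact i.elim

end PGame
end SetTheory

lemma misereP_iff (x : PGame) :
    MisereP x ↔ Nonempty x.LeftMoves ∧ ∀ i, ¬ MisereP (x.moveLeft i) := by
  cases x with | mk l r L R => exact Iff.rfl

theorem misereP_rel {x y : PGame} (r : x ≡r y) : MisereP x ↔ MisereP y := by
  induction r with
  | mk L R hL hR ihL ihR =>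
    rw [misereP_iff, misereP_iff]
    constructor
    · rintro ⟨⟨i⟩, h⟩
      refine ⟨⟨L i⟩, fun j => ?_⟩
      have := h (L.symm j)
      rw [ihL (L.symm j)] at this
      simpa using this
    · rintro ⟨⟨i⟩, h⟩
      refine ⟨⟨L.symm i⟩, fun j => ?_⟩
      rw [ihL j]
      exact h _

lemma misereP_add_iff (x y : PGame) :
    MisereP (x + y) ↔ ((Nonempty x.LeftMoves ∨ Nonempty y.LeftMoves) ∧
      (∀ i, ¬ MisereP (x.moveLeft i + y)) ∧ (∀ j, ¬ MisereP (x + y.moveLeft j))) := by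
  rw [misereP_iff]
  constructor
  · rintro ⟨hne, h⟩
    refine ⟨?_, fun i => ?_, fun j => ?_⟩
    · obtain ⟨i⟩ := hne
      rcases (toLeftMovesAdd.symm i) with i' | j'
      · exact Or.inl ⟨i'⟩
      · exact Or.inr ⟨j'⟩
    · have := h (toLeftMovesAdd (Sum.inl i)); rwa [add_moveLeft_inl] at this
    · have := h (toLeftMovesAdd (Sum.inr j)); rwa [add_moveLeft_inr] at this
  · rintro ⟨hne, h1, h2⟩
    refine ⟨?_, fun i => ?_⟩
    · rcases hne with h | h
      · obtain ⟨i⟩ := h; exact ⟨toLeftMovesAdd (Sum.inl i)⟩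
      · obtain ⟨j⟩ := h; exact ⟨toLeftMovesAdd (Sum.inr j)⟩
    · rw [← toLeftMovesAdd.apply_symm_apply i]
      rcases toLeftMovesAdd.symm i with i' | j'
      · rw [add_moveLeft_inl]; exact h1 i'
      · rw [add_moveLeft_inr]; exact h2 j'

lemma octalHeap_eq (d : ℕ → ℕ) (n : ℕ) : octalHeap d n =
    PGame.mk
      ({ j : ℕ // j = n ∧ 1 ≤ j ∧ (d j).testBit 0 } ⊕
        ({ j : ℕ // 1 ≤ j ∧ j + 1 ≤ n ∧ (d j).testBit 1 } ⊕
          { q : ℕ × ℕ × ℕ //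
              1 ≤ q.1 ∧ 1 ≤ q.2.1 ∧ 1 ≤ q.2.2 ∧ q.1 + q.2.1 + q.2.2 = n ∧
                (d q.1).testBit 2 }))
      ({ j : ℕ // j = n ∧ 1 ≤ j ∧ (d j).testBit 0 } ⊕
        ({ j : ℕ // 1 ≤ j ∧ j + 1 ≤ n ∧ (d j).testBit 1 } ⊕
          { q : ℕ × ℕ × ℕ //
              1 ≤ q.1 ∧ 1 ≤ q.2.1 ∧ 1 ≤ q.2.2 ∧ q.1 + q.2.1 + q.2.2 = n ∧
                (d q.1).testBit 2 }))
      (fun i =>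
        match i with
        | Sum.inl _ => 0
        | Sum.inr (Sum.inl ⟨j, _hj⟩) => octalHeap d (n - j)
        | Sum.inr (Sum.inr ⟨⟨_, a, b⟩, _hq⟩) => octalHeap d a + octalHeap d b)
      (fun i =>
        match i with
        | Sum.inl _ => 0
        | Sum.inr (Sum.inl ⟨j, _hj⟩) => octalHeap d (n - j)
        | Sum.inr (Sum.inr ⟨⟨_, a, b⟩, _hq⟩) => octalHeap d a + octalHeap d b) := by
  rw [octalHeap]
def sheaps (d : ℕ → ℕ) : List ℕ → PGame.{0}
  | [] => 0
  | n :: l => octalHeap d n + sheaps d l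

lemma heap_cases (d : ℕ → ℕ) (n : ℕ) (C : PGame → Prop)
    (h0 : 1 ≤ n → (d n).testBit 0 → C 0)
    (h1 : ∀ j, 1 ≤ j → j + 1 ≤ n → (d j).testBit 1 → C (octalHeap d (n - j)))
    (h2 : ∀ j a b, 1 ≤ j → 1 ≤ a → 1 ≤ b → j + a + b = n → (d j).testBit 2 →
      C (octalHeap d a + octalHeap d b)) :
    ∀ i : (octalHeap d n).LeftMoves, C ((octalHeap d n).moveLeft i) := by
  rw [octalHeap_eq]
  rintro (⟨j, rfl, hj1, hb⟩ | ⟨j, hj1, hjn, hb⟩ | ⟨⟨j, a, b⟩, hj, ha, hb, hsum, hbit⟩)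
  · exact h0 hj1 hb
  · exact h1 j hj1 hjn hb
  · exact h2 j a b hj ha hb hsum hbit

lemma heap_move1 (d : ℕ → ℕ) (n j : ℕ) (hj1 : 1 ≤ j) (hjn : j + 1 ≤ n)
    (hb : (d j).testBit 1) :
    ∃ i : (octalHeap d n).LeftMoves, (octalHeap d n).moveLeft i = octalHeap d (n - j) := by
  rw [octalHeap_eq]
  exact ⟨Sum.inr (Sum.inl ⟨j, hj1, hjn, hb⟩), rfl⟩

lemma heap_move2 (d : ℕ → ℕ) (n j a b : ℕ) (hj1 : 1 ≤ j) (ha : 1 ≤ a) (hb : 1 ≤ b)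
    (hsum : j + a + b = n) (hbit : (d j).testBit 2) :
    ∃ i : (octalHeap d n).LeftMoves,
      (octalHeap d n).moveLeft i = octalHeap d a + octalHeap d b := by
  rw [octalHeap_eq]
  exact ⟨Sum.inr (Sum.inr ⟨⟨j, a, b⟩, hj1, ha, hb, hsum, hbit⟩), rfl⟩

lemma heap_nonempty (d : ℕ → ℕ) (k n : ℕ) (hk' : ∀ i, k < i → d i = 0) (hn : k + 2 ≤ n) :
    Nonempty (octalHeap d n).LeftMoves ↔
      ∃ j, 1 ≤ j ∧ j ≤ k ∧ ((d j).testBit 1 ∨ (d j).testBit 2) := by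
  constructor
  · rintro ⟨i⟩
    revert i
    rw [octalHeap_eq]
    rintro (⟨j, rfl, hj1, hb⟩ | ⟨j, hj1, hjn, hb⟩ | ⟨⟨j, a, b⟩, hj, ha, hb2, hsum, hbit⟩)
    · rw [hk' j (by omega)] at hb; simp [Nat.zero_testBit] at hb
    · have hjk : j ≤ k := by
        by_contra h
        rw [hk' j (by omega)] at hb; simp [Nat.zero_testBit] at hb
      exact ⟨j, hj1, hjk, Or.inl hb⟩
    · have hjk : j ≤ k := by
        by_contra h
        rw [hk' j (by omega)] at hbit; simp [Nat.zero_testBit] at hbit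
      exact ⟨j, hj, hjk, Or.inr hbit⟩
  · rintro ⟨j, hj1, hjk, hb | hb⟩
    · obtain ⟨i, -⟩ := heap_move1 d n j hj1 (by omega) hb; exact ⟨i⟩
    · obtain ⟨i, -⟩ := heap_move2 d n j 1 (n - j - 1) hj1 le_rfl (by omega) (by omega) hb
      exact ⟨i⟩

lemma perm_rel (d : ℕ → ℕ) : ∀ {l l' : List ℕ}, l.Perm l' →
    Nonempty (sheaps d l ≡r sheaps d l') := by
  intro l l' h
  induction h with
  | nil => exact ⟨Relabelling.refl _⟩
  | cons x _ ih => obtain ⟨r⟩ := ih; exact ⟨Relabelling.addCongr (Relabelling.refl _) r⟩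
  | swap x y t =>
    exact ⟨((addAssocRelabelling _ _ _).symm.trans
      ((Relabelling.addCongr (addCommRelabelling _ _) (Relabelling.refl _)).trans
        (addAssocRelabelling _ _ _)))⟩
  | trans _ _ ih1 ih2 =>
    obtain ⟨r1⟩ := ih1; obtain ⟨r2⟩ := ih2; exact ⟨r1.trans r2⟩

lemma misereP_perm (d : ℕ → ℕ) {l l' : List ℕ} (h : l.Perm l') :
    MisereP (sheaps d l) ↔ MisereP (sheaps d l') := by
  obtain ⟨r⟩ := perm_rel d h; exact misereP_rel r

lemma step_left (d : ℕ → ℕ) : ∀ (l : List ℕ) (i : (sheaps d l).LeftMoves),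
    ∃ l' : List ℕ, l'.sum < l.sum ∧ (∀ x ∈ l', ∃ y ∈ l, x ≤ y) ∧
      Nonempty ((sheaps d l).moveLeft i ≡r sheaps d l')
  | [], i => by cases i
  | m :: t, i => by
    rw [← toLeftMovesAdd.apply_symm_apply i]
    rcases (toLeftMovesAdd.symm i) with iH | iT
    · have hmv : (sheaps d (m :: t)).moveLeft (toLeftMovesAdd (Sum.inl iH))
          = (octalHeap d m).moveLeft iH + sheaps d t := add_moveLeft_inl _ _
      rw [hmv]
      clear hmv i
      revert iH
      refine heap_cases d m (fun g => ∃ l', l'.sum < (m :: t).sum ∧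
        (∀ x ∈ l', ∃ y ∈ m :: t, x ≤ y) ∧ Nonempty (g + sheaps d t ≡r sheaps d l')) ?_ ?_ ?_
      · intro hm _
        exact ⟨t, by simp; omega, fun x hx => ⟨x, by simp [hx], le_rfl⟩,
          ⟨zeroAddRelabelling _⟩⟩
      · intro j hj1 hjm _
        exact ⟨(m - j) :: t, by simp; omega,
          fun x hx => by
            rcases List.mem_cons.1 hx with rfl | hx
            · exact ⟨m, by simp, by omega⟩
            · exact ⟨x, by simp [hx], le_rfl⟩,
          ⟨Relabelling.refl _⟩⟩
      · intro j a b hj ha hb hsum _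
        refine ⟨a :: b :: t, by simp; omega, fun x hx => ?_, ⟨addAssocRelabelling _ _ _⟩⟩
        rcases List.mem_cons.1 hx with rfl | hx
        · exact ⟨m, by simp, by omega⟩
        rcases List.mem_cons.1 hx with rfl | hx
        · exact ⟨m, by simp, by omega⟩
        · exact ⟨x, by simp [hx], le_rfl⟩
    · have hmv : (sheaps d (m :: t)).moveLeft (toLeftMovesAdd (Sum.inr iT))
          = octalHeap d m + (sheaps d t).moveLeft iT := add_moveLeft_inr _ _
      rw [hmv]
      obtain ⟨t', ht1, ht2, ⟨r⟩⟩ := step_left d t iT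
      refine ⟨m :: t', by simp; omega, fun x hx => ?_,
        ⟨Relabelling.addCongr (Relabelling.refl _) r⟩⟩
      rcases List.mem_cons.1 hx with rfl | hx
      · exact ⟨x, by simp, le_rfl⟩
      · obtain ⟨y, hy, hxy⟩ := ht2 x hx; exact ⟨y, by simp [hy], hxy⟩
lemma heap_cases_right (d : ℕ → ℕ) (n : ℕ) (C : PGame → Prop)
    (h0 : 1 ≤ n → (d n).testBit 0 → C 0)
    (h1 : ∀ j, 1 ≤ j → j + 1 ≤ n → (d j).testBit 1 → C (octalHeap d (n - j)))
    (h2 : ∀ j a b, 1 ≤ j → 1 ≤ a → 1 ≤ b → j + a + b = n → (d j).testBit 2 →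
      C (octalHeap d a + octalHeap d b)) :
    ∀ i : (octalHeap d n).RightMoves, C ((octalHeap d n).moveRight i) := by
  rw [octalHeap_eq]
  rintro (⟨j, rfl, hj1, hb⟩ | ⟨j, hj1, hjn, hb⟩ | ⟨⟨j, a, b⟩, hj, ha, hb, hsum, hbit⟩)
  · exact h0 hj1 hb
  · exact h1 j hj1 hjn hb
  · exact h2 j a b hj ha hb hsum hbit

lemma step_right (d : ℕ → ℕ) : ∀ (l : List ℕ) (i : (sheaps d l).RightMoves),
    ∃ l' : List ℕ, l'.sum < l.sum ∧ (∀ x ∈ l', ∃ y ∈ l, x ≤ y) ∧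
      Nonempty ((sheaps d l).moveRight i ≡r sheaps d l')
  | [], i => by cases i
  | m :: t, i => by
    rw [← toRightMovesAdd.apply_symm_apply i]
    rcases (toRightMovesAdd.symm i) with iH | iT
    · have hmv : (sheaps d (m :: t)).moveRight (toRightMovesAdd (Sum.inl iH))
          = (octalHeap d m).moveRight iH + sheaps d t := add_moveRight_inl _ _
      rw [hmv]
      clear hmv i
      revert iH
      refine heap_cases_right d m (fun g => ∃ l', l'.sum < (m :: t).sum ∧
        (∀ x ∈ l', ∃ y ∈ m :: t, x ≤ y) ∧ Nonempty (g + sheaps d t ≡r sheaps d l')) ?_ ?_ ?_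
      · intro hm _
        exact ⟨t, by simp; omega, fun x hx => ⟨x, by simp [hx], le_rfl⟩,
          ⟨zeroAddRelabelling _⟩⟩
      · intro j hj1 hjm _
        exact ⟨(m - j) :: t, by simp; omega,
          fun x hx => by
            rcases List.mem_cons.1 hx with rfl | hx
            · exact ⟨m, by simp, by omega⟩
            · exact ⟨x, by simp [hx], le_rfl⟩,
          ⟨Relabelling.refl _⟩⟩
      · intro j a b hj ha hb hsum _
        refine ⟨a :: b :: t, by simp; omega, fun x hx => ?_, ⟨addAssocRelabelling _ _ _⟩⟩
        rcases List.mem_cons.1 hx with rfl | hx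
        · exact ⟨m, by simp, by omega⟩
        rcases List.mem_cons.1 hx with rfl | hx
        · exact ⟨m, by simp, by omega⟩
        · exact ⟨x, by simp [hx], le_rfl⟩
    · have hmv : (sheaps d (m :: t)).moveRight (toRightMovesAdd (Sum.inr iT))
          = octalHeap d m + (sheaps d t).moveRight iT := add_moveRight_inr _ _
      rw [hmv]
      obtain ⟨t', ht1, ht2, ⟨r⟩⟩ := step_right d t iT
      refine ⟨m :: t', by simp; omega, fun x hx => ?_,
        ⟨Relabelling.addCongr (Relabelling.refl _) r⟩⟩
      rcases List.mem_cons.1 hx with rfl | hx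
      · exact ⟨x, by simp, le_rfl⟩
      · obtain ⟨y, hy, hxy⟩ := ht2 x hx; exact ⟨y, by simp [hy], hxy⟩

lemma sheaps_append (d : ℕ → ℕ) : ∀ (l₁ l₂ : List ℕ),
    Nonempty (sheaps d (l₁ ++ l₂) ≡r sheaps d l₁ + sheaps d l₂)
  | [], l₂ => ⟨(zeroAddRelabelling _).symm⟩
  | a :: l₁, l₂ => by
    obtain ⟨r⟩ := sheaps_append d l₁ l₂
    exact ⟨(Relabelling.addCongr (Relabelling.refl _) r).trans
      (addAssocRelabelling _ _ _).symm⟩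

lemma sheaps_mem (d : ℕ → ℕ) (S : Set PGame) :
    ∀ (l : List ℕ), (∀ m ∈ l, octalHeap d m ∈ S) → InClosure S (sheaps d l)
  | [], _ => InClosure.zero
  | m :: t, h => InClosure.add (InClosure.base (h m (by simp)))
      (sheaps_mem d S t fun x hx => h x (by simp [hx]))

lemma inclosure_mono {S T : Set PGame} (hST : S ⊆ T) {G : PGame}
    (h : InClosure S G) : InClosure T G := by
  induction h with
  | base hG => exact InClosure.base (hST hG)
  | zero => exact InClosure.zero
  | add _ _ ih1 ih2 => exact InClosure.add ih1 ih2
  | moveLeft i _ ih => exact InClosure.moveLeft i ih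
  | moveRight j _ ih => exact InClosure.moveRight j ih

lemma decomp (d : ℕ → ℕ) (S : Set PGame) (P : ℕ → Prop)
    (hS : ∀ X ∈ S, ∃ n, P n ∧ X = octalHeap d n) {G : PGame} (h : InClosure S G) :
    ∃ l : List ℕ, (∀ x ∈ l, ∃ y, P y ∧ x ≤ y) ∧ Nonempty (G ≡r sheaps d l) := by
  induction h with
  | @base G hG =>
    obtain ⟨n, hP, rfl⟩ := hS G hG
    exact ⟨[n], fun x hx => by simp at hx; exact ⟨n, hP, by omega⟩,
      ⟨(addZeroRelabelling _).symm⟩⟩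
  | zero => exact ⟨[], by simp, ⟨Relabelling.refl _⟩⟩
  | add _ _ ih1 ih2 =>
    obtain ⟨l₁, hb1, ⟨r1⟩⟩ := ih1
    obtain ⟨l₂, hb2, ⟨r2⟩⟩ := ih2
    obtain ⟨ra⟩ := sheaps_append d l₁ l₂
    refine ⟨l₁ ++ l₂, fun x hx => ?_, ⟨(r1.addCongr r2).trans ra.symm⟩⟩
    rcases List.mem_append.1 hx with hx | hx
    · exact hb1 x hx
    · exact hb2 x hx
  | moveLeft i _ ih =>
    obtain ⟨l, hb, ⟨r⟩⟩ := ih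
    obtain ⟨l', _, hb', ⟨r'⟩⟩ := step_left d l (r.leftMovesEquiv i)
    refine ⟨l', fun x hx => ?_, ⟨(r.moveLeft i).trans r'⟩⟩
    obtain ⟨y, hy, hxy⟩ := hb' x hx
    obtain ⟨z, hz, hyz⟩ := hb y hy
    exact ⟨z, hz, le_trans hxy hyz⟩
  | moveRight j _ ih =>
    obtain ⟨l, hb, ⟨r⟩⟩ := ih
    obtain ⟨l', _, hb', ⟨r'⟩⟩ := step_right d l (r.rightMovesEquiv j)
    refine ⟨l', fun x hx => ?_, ⟨(r.moveRight j).trans r'⟩⟩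
    obtain ⟨y, hy, hxy⟩ := hb' x hx
    obtain ⟨z, hz, hyz⟩ := hb y hy
    exact ⟨z, hz, le_trans hxy hyz⟩
theorem mainS (d : ℕ → ℕ) (k n₀ p : ℕ) (hn₀ : 0 < n₀) (hp : 0 < p)
    (hk' : ∀ i, k < i → d i = 0)
    (hper0 : ∀ n, n₀ ≤ n → n < 2*n₀+p+k → ∀ l : List ℕ, (∀ m ∈ l, m ≤ 2*n₀+2*p+k) →
       (MisereP (sheaps d ((n+p) :: l)) ↔ MisereP (sheaps d (n :: l)))) :
    ∀ N C n (l : List ℕ), n + l.sum ≤ N → l.sum ≤ C → n₀ ≤ n →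
       (MisereP (sheaps d ((n+p) :: l)) ↔ MisereP (sheaps d (n :: l))) := by
  intro N
  induction N using Nat.strong_induction_on with
  | _ N ihN =>
  intro C
  induction C using Nat.strong_induction_on with
  | _ C ihC =>
  intro n l hN hC hn
  have key : ∀ n' (l' : List ℕ), n₀ ≤ n' → n' + l'.sum < n + l.sum →
      (MisereP (sheaps d ((n'+p) :: l')) ↔ MisereP (sheaps d (n' :: l'))) := by
    intro n' l' h1 h2
    exact ihN (n' + l'.sum) (by omega) l'.sum n' l' le_rfl le_rfl h1
  by_cases hwin : 2*n₀+p+k ≤ n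
  · -- Case C: option matching
    show MisereP (octalHeap d (n+p) + sheaps d l) ↔ MisereP (octalHeap d n + sheaps d l)
    rw [misereP_add_iff, misereP_add_iff]
    have iff_ne : Nonempty (octalHeap d (n+p)).LeftMoves ↔
        Nonempty (octalHeap d n).LeftMoves := by
      rw [heap_nonempty d k _ hk' (by omega), heap_nonempty d k _ hk' (by omega)]
    have iff_ctx : ∀ j : (sheaps d l).LeftMoves,
        (MisereP (octalHeap d (n+p) + (sheaps d l).moveLeft j) ↔
         MisereP (octalHeap d n + (sheaps d l).moveLeft j)) := by
      intro j
      obtain ⟨l', hs, -, ⟨r⟩⟩ := step_left d l j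
      have r1 : octalHeap d (n+p) + (sheaps d l).moveLeft j ≡r sheaps d ((n+p) :: l') :=
        Relabelling.addCongr (Relabelling.refl _) r
      have r2 : octalHeap d n + (sheaps d l).moveLeft j ≡r sheaps d (n :: l') :=
        Relabelling.addCongr (Relabelling.refl _) r
      rw [misereP_rel r1, misereP_rel r2]
      exact key n l' hn (by omega)
    have iff_head : (∀ i, ¬ MisereP ((octalHeap d (n+p)).moveLeft i + sheaps d l)) ↔
        (∀ i, ¬ MisereP ((octalHeap d n).moveLeft i + sheaps d l)) := by
      constructor
      · intro hA
        refine heap_cases d n (fun g => ¬ MisereP (g + sheaps d l)) ?_ ?_ ?_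
        · intro h1 hb
          rw [hk' n (by omega)] at hb; simp [Nat.zero_testBit] at hb
        · intro j hj1 hjn hb
          have hjk : j ≤ k := by
            by_contra h; rw [hk' j (by omega)] at hb; simp [Nat.zero_testBit] at hb
          have hk1 := key (n - j) l (by omega) (by omega)
          show ¬ MisereP (sheaps d ((n - j) :: l))
          rw [← hk1]
          obtain ⟨i', hi'⟩ := heap_move1 d (n+p) j hj1 (by omega) hb
          have hAi := hA i'
          rw [hi', show n + p - j = n - j + p by omega] at hAi
          exact hAi
        · intro j a b hj1 ha hb hsum hbit
          have hjk : j ≤ k := by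
            by_contra h; rw [hk' j (by omega)] at hbit; simp [Nat.zero_testBit] at hbit
          by_cases hbn : n₀ ≤ b
          · have hk1 := key b (a :: l) hbn (by simp [List.sum_cons]; omega)
            obtain ⟨i', hi'⟩ := heap_move2 d (n+p) j a (b+p) hj1 ha (by omega) (by omega) hbit
            intro hcon
            apply hA i'
            rw [hi']
            rw [misereP_rel (addAssocRelabelling (octalHeap d a) (octalHeap d b)
              (sheaps d l))] at hcon
            rw [misereP_rel (addAssocRelabelling (octalHeap d a) (octalHeap d (b+p))
              (sheaps d l))]
            show MisereP (sheaps d (a :: (b+p) :: l))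
            rw [misereP_perm d (List.Perm.swap (b+p) a l), hk1,
              misereP_perm d (List.Perm.swap a b l)]
            exact hcon
          · have han : n₀ ≤ a := by omega
            have hk1 := key a (b :: l) han (by simp [List.sum_cons]; omega)
            obtain ⟨i', hi'⟩ := heap_move2 d (n+p) j (a+p) b hj1 (by omega) hb (by omega) hbit
            intro hcon
            apply hA i'
            rw [hi']
            rw [misereP_rel (addAssocRelabelling (octalHeap d a) (octalHeap d b)
              (sheaps d l))] at hcon
            rw [misereP_rel (addAssocRelabelling (octalHeap d (a+p)) (octalHeap d b)
              (sheaps d l))]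
            show MisereP (sheaps d ((a+p) :: b :: l))
            rw [hk1]
            exact hcon
      · intro hB
        refine heap_cases d (n+p) (fun g => ¬ MisereP (g + sheaps d l)) ?_ ?_ ?_
        · intro h1 hb
          rw [hk' (n+p) (by omega)] at hb; simp [Nat.zero_testBit] at hb
        · intro j hj1 hjn hb
          have hjk : j ≤ k := by
            by_contra h; rw [hk' j (by omega)] at hb; simp [Nat.zero_testBit] at hb
          have hk1 := key (n - j) l (by omega) (by omega)
          show ¬ MisereP (sheaps d ((n + p - j) :: l))
          rw [show n + p - j = n - j + p by omega, hk1]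
          obtain ⟨i', hi'⟩ := heap_move1 d n j hj1 (by omega) hb
          have hBi := hB i'
          rw [hi'] at hBi
          exact hBi
        · intro j a b hj1 ha hb hsum hbit
          have hjk : j ≤ k := by
            by_contra h; rw [hk' j (by omega)] at hbit; simp [Nat.zero_testBit] at hbit
          by_cases hbp : n₀ + p ≤ b
          · have hk1 := key (b - p) (a :: l) (by omega) (by simp [List.sum_cons]; omega)
            rw [show b - p + p = b by omega] at hk1
            obtain ⟨i', hi'⟩ := heap_move2 d n j a (b-p) hj1 ha (by omega) (by omega) hbit
            intro hcon
            apply hB i'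
            rw [hi']
            rw [misereP_rel (addAssocRelabelling (octalHeap d a) (octalHeap d b)
              (sheaps d l))] at hcon
            rw [misereP_rel (addAssocRelabelling (octalHeap d a) (octalHeap d (b-p))
              (sheaps d l))]
            show MisereP (sheaps d (a :: (b-p) :: l))
            rw [misereP_perm d (List.Perm.swap (b-p) a l), ← hk1,
              misereP_perm d (List.Perm.swap a b l)]
            exact hcon
          · have hap : n₀ + p ≤ a := by omega
            have hk1 := key (a - p) (b :: l) (by omega) (by simp [List.sum_cons]; omega)
            rw [show a - p + p = a by omega] at hk1
            obtain ⟨i', hi'⟩ := heap_move2 d n j (a-p) b hj1 (by omega) hb (by omega) hbit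
            intro hcon
            apply hB i'
            rw [hi']
            rw [misereP_rel (addAssocRelabelling (octalHeap d a) (octalHeap d b)
              (sheaps d l))] at hcon
            rw [misereP_rel (addAssocRelabelling (octalHeap d (a-p)) (octalHeap d b)
              (sheaps d l))]
            show MisereP (sheaps d ((a-p) :: b :: l))
            rw [← hk1]
            exact hcon
    constructor
    · rintro ⟨hne, hh, hc⟩
      refine ⟨?_, iff_head.mp hh, fun j => ?_⟩
      · rcases hne with h | h
        · exact Or.inl (iff_ne.mp h)
        · exact Or.inr h
      · rw [← iff_ctx j]; exact hc j
    · rintro ⟨hne, hh, hc⟩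
      refine ⟨?_, iff_head.mpr hh, fun j => ?_⟩
      · rcases hne with h | h
        · exact Or.inl (iff_ne.mpr h)
        · exact Or.inr h
      · rw [iff_ctx j]; exact hc j
  · by_cases hbig : ∃ q ∈ l, 2*n₀+2*p+k < q
    · -- Case B
      obtain ⟨q, hq, hqM⟩ := hbig
      obtain ⟨l₁, l₂, rfl⟩ := List.append_of_mem hq
      obtain ⟨q', rfl⟩ : ∃ q', q = q' + p := ⟨q - p, by omega⟩
      have e1 := misereP_perm d
        ((List.Perm.cons (n+p) List.perm_middle).trans
          (List.Perm.swap (q'+p) (n+p) (l₁ ++ l₂)))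
      have e2 : MisereP (sheaps d ((q'+p) :: (n+p) :: (l₁ ++ l₂))) ↔
          MisereP (sheaps d (q' :: (n+p) :: (l₁ ++ l₂))) :=
        ihC ((n+p) + (l₁ ++ l₂).sum) (by simp only [List.sum_cons, List.sum_append] at hC ⊢; omega)
          q' ((n+p) :: (l₁ ++ l₂))
          (by simp only [List.sum_cons, List.sum_append] at hN ⊢; omega)
          (by simp only [List.sum_cons, List.sum_append]; omega) (by omega)
      have e3 := misereP_perm d (List.Perm.swap (n+p) q' (l₁ ++ l₂))
      have e4 : MisereP (sheaps d ((n+p) :: q' :: (l₁ ++ l₂))) ↔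
          MisereP (sheaps d (n :: q' :: (l₁ ++ l₂))) :=
        key n (q' :: (l₁ ++ l₂)) hn
          (by simp only [List.sum_cons, List.sum_append]; omega)
      have e5 := misereP_perm d (List.Perm.swap q' n (l₁ ++ l₂))
      have e6 : MisereP (sheaps d ((q'+p) :: n :: (l₁ ++ l₂))) ↔
          MisereP (sheaps d (q' :: n :: (l₁ ++ l₂))) :=
        key q' (n :: (l₁ ++ l₂)) (by omega)
          (by simp only [List.sum_cons, List.sum_append]; omega)
      have e7 := misereP_perm d
        ((List.Perm.swap n (q'+p) (l₁ ++ l₂)).trans (List.Perm.cons n List.perm_middle.symm))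
      exact e1.trans (e2.trans (e3.trans (e4.trans (e5.trans (e6.symm.trans e7)))))
    · -- Case A
      refine hper0 n hn (by omega) (l) (fun m hm => ?_)
      by_contra h
      exact hbig ⟨m, hm, by omega⟩
def redu (B p : ℕ) : ℕ → ℕ
  | n => if n ≤ B ∨ p = 0 then n else redu B p (n - p)
termination_by n => n
decreasing_by omega

lemma redu_of_le {B p n : ℕ} (h : n ≤ B) : redu B p n = n := by
  rw [redu]; simp [h]

lemma redu_le (B p : ℕ) (hp : 0 < p) : ∀ n, redu B p n ≤ B
  | n => by
    rw [redu]
    split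
    · next h => omega
    · exact redu_le B p hp (n - p)
termination_by n => n
decreasing_by omega

lemma redu_add {B p : ℕ} (hp : 0 < p) (n : ℕ) (h : B < n + p) :
    redu B p (n + p) = redu B p n := by
  rw [redu]
  rw [if_neg (by omega)]
  congr 1
  omega

lemma map_redu_fix (B p : ℕ) : ∀ (l : List ℕ), (∀ m ∈ l, m ≤ B) →
    l.map (redu B p) = l
  | [], _ => rfl
  | m :: t, h => by
    simp only [List.map_cons]
    rw [redu_of_le (h m (by simp)), map_redu_fix B p t (fun x hx => h x (by simp [hx]))]

theorem reduAll (d : ℕ → ℕ) (n₀ p k : ℕ) (hn₀ : 0 < n₀) (hp : 0 < p)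
    (main : ∀ n (l : List ℕ), n₀ ≤ n →
      (MisereP (sheaps d ((n+p) :: l)) ↔ MisereP (sheaps d (n :: l)))) :
    ∀ E (l : List ℕ), (l.map (fun m => m - (2*n₀+p+k))).sum ≤ E →
      (MisereP (sheaps d l) ↔ MisereP (sheaps d (l.map (redu (2*n₀+p+k) p)))) := by
  intro E
  induction E using Nat.strong_induction_on with
  | _ E ihE =>
  intro l hE
  by_cases hall : ∀ m ∈ l, m ≤ 2*n₀+p+k
  · rw [map_redu_fix _ _ _ hall]
  · push_neg at hall
    obtain ⟨q, hq, hqB⟩ := hall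
    obtain ⟨l₁, l₂, rfl⟩ := List.append_of_mem hq
    obtain ⟨q', rfl⟩ : ∃ q', q = q' + p := ⟨q - p, by omega⟩
    have h1 := misereP_perm d (List.perm_middle (a := q'+p) (l₁ := l₁) (l₂ := l₂))
    have h2 := main q' (l₁ ++ l₂) (by omega)
    have h3 := ihE (((q' :: (l₁ ++ l₂)).map fun m => m - (2*n₀+p+k)).sum)
      (by
        simp only [List.map_cons, List.map_append, List.sum_cons, List.sum_append] at hE ⊢
        omega)
      (q' :: (l₁ ++ l₂)) le_rfl
    have hr : redu (2*n₀+p+k) p (q'+p) = redu (2*n₀+p+k) p q' := redu_add hp q' (by omega)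
    rw [List.map_append, List.map_cons]
    refine h1.trans (h2.trans (h3.trans ?_))
    rw [List.map_cons, List.map_append, hr]
    exact (misereP_perm d (List.perm_middle (a := redu (2*n₀+p+k) p q')
      (l₁ := l₁.map (redu (2*n₀+p+k) p)) (l₂ := l₂.map (redu (2*n₀+p+k) p)))).symm

/-- **Misère Periodicity Theorem (game-level form).** Let `Γ` be an octal game with code
`0.d₁…d_k`, `d_k ≠ 0`, `d_i = 0` for `i > k`.  Fix `n₀ > 0`, `p > 0`, set
`M = 2n₀ + 2p + k`, let `𝒜_M = cl (H₀, …, H_M)` and `𝒜 = cl (H₀, H₁, …)`.  If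
`H (n+p) ≡_{𝒜_M} H n` for every `n` with `n₀ ≤ n < 2n₀ + p + k`, then (a) for all
`G₁, G₂ ∈ 𝒜_M`, `G₁ ≡_{𝒜_M} G₂` iff `G₁ ≡_𝒜 G₂`; and (b) `H (n+p) ≡_𝒜 H n` for all
`n ≥ n₀`. -/
theorem misere_periodicity (d : ℕ → ℕ) (hd : ∀ j, d j < 8)
    (k : ℕ) (hk1 : 1 ≤ k) (hk : d k ≠ 0) (hk' : ∀ i, k < i → d i = 0)
    (n₀ p : ℕ) (hn₀ : 0 < n₀) (hp : 0 < p)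
    (M : ℕ) (hM : M = 2 * n₀ + 2 * p + k)
    (AM : Set PGame) (hAM : AM = gameClosure {X | ∃ n ≤ M, X = octalHeap d n})
    (A : Set PGame) (hA : A = gameClosure {X | ∃ n, X = octalHeap d n})
    (hper : ∀ n, n₀ ≤ n → n < 2 * n₀ + p + k →
      MisEquivOn AM (octalHeap d (n + p)) (octalHeap d n)) :
    (∀ G₁ ∈ AM, ∀ G₂ ∈ AM, (MisEquivOn AM G₁ G₂ ↔ MisEquivOn A G₁ G₂)) ∧
      ∀ n, n₀ ≤ n → MisEquivOn A (octalHeap d (n + p)) (octalHeap d n) := by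
  subst hM hAM hA
  set M := 2 * n₀ + 2 * p + k with hM
  set B := 2 * n₀ + p + k with hB
  -- hypothesis in list form
  have hper0 : ∀ n, n₀ ≤ n → n < 2*n₀+p+k → ∀ l : List ℕ, (∀ m ∈ l, m ≤ 2*n₀+2*p+k) →
      (MisereP (sheaps d ((n+p) :: l)) ↔ MisereP (sheaps d (n :: l))) := by
    intro n h1 h2 l hl
    have hmem : sheaps d l ∈ gameClosure {X | ∃ n ≤ M, X = octalHeap d n} :=
      sheaps_mem d _ l (fun m hm => ⟨m, hl m hm, rfl⟩)
    exact hper n h1 h2 (sheaps d l) hmem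
  have main : ∀ n (l : List ℕ), n₀ ≤ n →
      (MisereP (sheaps d ((n+p) :: l)) ↔ MisereP (sheaps d (n :: l))) :=
    fun n l hn => mainS d k n₀ p hn₀ hp hk' hper0 (n + l.sum) l.sum n l le_rfl le_rfl hn
  have reduA : ∀ l : List ℕ,
      MisereP (sheaps d l) ↔ MisereP (sheaps d (l.map (redu B p))) :=
    fun l => reduAll d n₀ p k hn₀ hp main ((l.map (fun m => m - B)).sum) l le_rfl
  have decompA : ∀ {X : PGame}, X ∈ gameClosure {X | ∃ n, X = octalHeap d n} →
      ∃ l : List ℕ, Nonempty (X ≡r sheaps d l) := by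
    intro X hX
    obtain ⟨l, -, hr⟩ := decomp d _ (fun _ => True)
      (by rintro Y ⟨m, rfl⟩; exact ⟨m, trivial, rfl⟩) hX
    exact ⟨l, hr⟩
  have decompAM : ∀ {X : PGame}, X ∈ gameClosure {X | ∃ n ≤ M, X = octalHeap d n} →
      ∃ l : List ℕ, (∀ m ∈ l, m ≤ M) ∧ Nonempty (X ≡r sheaps d l) := by
    intro X hX
    obtain ⟨l, hb, hr⟩ := decomp d _ (fun m => m ≤ M)
      (by rintro Y ⟨m, hm, rfl⟩; exact ⟨m, hm, rfl⟩) hX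
    refine ⟨l, fun m hm => ?_, hr⟩
    obtain ⟨y, hy, hmy⟩ := hb m hm
    omega
  constructor
  · intro G₁ hG₁ G₂ hG₂
    constructor
    · intro hEq X hX
      obtain ⟨l, ⟨r⟩⟩ := decompA hX
      set l' := l.map (redu B p) with hl'
      have hl'le : ∀ m ∈ l', m ≤ M := by
        intro m hm
        obtain ⟨x, -, rfl⟩ := List.mem_map.1 hm
        have := redu_le B p hp x
        omega
      have hX' : sheaps d l' ∈ gameClosure {X | ∃ n ≤ M, X = octalHeap d n} :=
        sheaps_mem d _ l' (fun m hm => ⟨m, hl'le m hm, rfl⟩)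
      have claim : ∀ G : PGame, G ∈ gameClosure {X | ∃ n ≤ M, X = octalHeap d n} →
          (MisereP (G + X) ↔ MisereP (G + sheaps d l')) := by
        intro G hG
        obtain ⟨lG, hlG, ⟨rG⟩⟩ := decompAM hG
        obtain ⟨ra⟩ := sheaps_append d lG l
        obtain ⟨ra'⟩ := sheaps_append d lG l'
        have t1 : G + X ≡r sheaps d (lG ++ l) := (rG.addCongr r).trans ra.symm
        have t2 : G + sheaps d l' ≡r sheaps d (lG ++ l') :=
          (rG.addCongr (Relabelling.refl _)).trans ra'.symm
        rw [misereP_rel t1, misereP_rel t2]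
        have h1 := reduA (lG ++ l)
        have h2 := reduA (lG ++ l')
        rw [List.map_append] at h1 h2
        rw [show l'.map (redu B p) = l' by
          exact map_redu_fix B p l' (fun m hm => by
            obtain ⟨x, -, rfl⟩ := List.mem_map.1 hm
            exact redu_le B p hp x)] at h2
        exact h1.trans h2.symm
      exact (claim G₁ hG₁).trans ((hEq _ hX').trans (claim G₂ hG₂).symm)
    · intro hEq X hX
      refine hEq X (inclosure_mono ?_ hX)
      rintro Y ⟨m, -, rfl⟩
      exact ⟨m, rfl⟩
  · intro n hn X hX
    obtain ⟨l, ⟨r⟩⟩ := decompA hX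
    have r1 : octalHeap d (n+p) + X ≡r sheaps d ((n+p) :: l) :=
      Relabelling.addCongr (Relabelling.refl _) r
    have r2 : octalHeap d n + X ≡r sheaps d (n :: l) :=
      Relabelling.addCongr (Relabelling.refl _) r
    rw [misereP_rel r1, misereP_rel r2]
    exact main n l hn
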